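/- Let a < b, let f : [a,b] → ℝ be càdlàg on [a,b], and let c > 0. Let T := inf { s ∈ [a,b] : sup_{t ∈ [a,s]} f(t) − f(s) ≥ c }, with T := b if this set is empty. Then for every s ∈ (a,b], UTV^c(f,[a,s]) = sup_{a ≤ t < u ≤ min(T,s)} max(f(u) − f(t) − c, 0) + UTV^c(f,[min(T,s), s]), where the supremum over an empty index set and UTV^c over a degenerate interval are both taken to be 0. -/

import Mathlib

open Set Filter Topology ENNReal

/-- Truncated variation `TV^c(f,[a,b])` as a supremum over partitions, valued in `[0,∞]`. -/
noncomputable def truncVar (f : ℝ → ℝ) (a b c : ℝ) : ℝ≥0∞ :=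
  ⨆ (n : ℕ) (t : ℕ → ℝ) (_ : a ≤ t 0) (_ : ∀ i < n, t i < t (i + 1)) (_ : t n ≤ b),
    ∑ i ∈ Finset.range n, ENNReal.ofReal (max (|f (t (i + 1)) - f (t i)| - c) 0)

/-- Total variation `TV(f,[a,b])`, valued in `[0,∞]`. -/
noncomputable def totalVar (f : ℝ → ℝ) (a b : ℝ) : ℝ≥0∞ := truncVar f a b 0

/-- Upward truncated variation `UTV^c(f,[a,b])`. -/
noncomputable def upTruncVar (f : ℝ → ℝ) (a b c : ℝ) : ℝ≥0∞ :=
  ⨆ (n : ℕ) (t : ℕ → ℝ) (_ : a ≤ t 0) (_ : ∀ i < n, t i < t (i + 1)) (_ : t n ≤ b),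
    ∑ i ∈ Finset.range n, ENNReal.ofReal (max (f (t (i + 1)) - f (t i) - c) 0)

/-- Downward truncated variation `DTV^c(f,[a,b])`. -/
noncomputable def downTruncVar (f : ℝ → ℝ) (a b c : ℝ) : ℝ≥0∞ :=
  ⨆ (n : ℕ) (t : ℕ → ℝ) (_ : a ≤ t 0) (_ : ∀ i < n, t i < t (i + 1)) (_ : t n ≤ b),
    ∑ i ∈ Finset.range n, ENNReal.ofReal (max (f (t i) - f (t (i + 1)) - c) 0)

/-- `f` is càdlàg on `[a,b]`: right-continuous at every point of `[a,b)` and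
with a finite left limit at every point of `(a,b]`. -/
def CadlagOn (f : ℝ → ℝ) (a b : ℝ) : Prop :=
  (∀ x ∈ Set.Ico a b, Filter.Tendsto f (𝓝[>] x) (𝓝 (f x))) ∧
  (∀ x ∈ Set.Ioc a b, ∃ L : ℝ, Filter.Tendsto f (𝓝[<] x) (𝓝 L))

open Classical in
/-- The first time in `[a,b]` at which `f` has dropped by at least `c` from its running
supremum, taken to be `b` if no such time exists. -/
noncomputable def firstDownTime (f : ℝ → ℝ) (a b c : ℝ) : ℝ :=
  if {x ∈ Set.Icc a b | c ≤ sSup (f '' Set.Icc a x) - f x} = ∅ then b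
  else sInf {x ∈ Set.Icc a b | c ≤ sSup (f '' Set.Icc a x) - f x}

private lemma step_lt {t : ℕ → ℝ} {n : ℕ} (h : ∀ i < n, t i < t (i + 1)) :
    ∀ {i j : ℕ}, i < j → j ≤ n → t i < t j := by
  intro i j hij hj
  induction j with
  | zero => omega
  | succ k ih =>
    rcases Nat.lt_or_ge i k with h1 | h1
    · exact (ih h1 (by omega)).trans (h k (by omega))
    · have hik : i = k := by omega
      subst hik
      exact h i (by omega)

private lemma step_le {t : ℕ → ℝ} {n : ℕ} (h : ∀ i < n, t i < t (i + 1))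
    {i j : ℕ} (hij : i ≤ j) (hj : j ≤ n) : t i ≤ t j := by
  rcases eq_or_lt_of_le hij with rfl | h'
  · exact le_refl _
  · exact (step_lt h h' hj).le

private lemma cadlag_bddAbove {f : ℝ → ℝ} {a b : ℝ} (hab : a ≤ b) (hf : CadlagOn f a b) :
    BddAbove (f '' Set.Icc a b) := by
  set A : Set ℝ := {x ∈ Set.Icc a b | BddAbove (f '' Set.Icc a x)} with hA
  have haA : a ∈ A := by
    refine ⟨⟨le_refl a, hab⟩, ?_⟩
    rw [Set.Icc_self]
    exact (Set.finite_singleton a).image f |>.bddAbove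
  have hAne : A.Nonempty := ⟨a, haA⟩
  have hAbdd : BddAbove A := ⟨b, fun z hz => hz.1.2⟩
  set x₀ := sSup A with hx₀
  have hax₀ : a ≤ x₀ := le_csSup hAbdd haA
  have hx₀b : x₀ ≤ b := csSup_le hAne fun z hz => hz.1.2
  -- x₀ ∈ A
  have hx₀A : x₀ ∈ A := by
    rcases eq_or_lt_of_le hax₀ with heq | hax₀'
    · rw [← heq]; exact haA
    · obtain ⟨L, hL⟩ := hf.2 x₀ ⟨hax₀', hx₀b⟩
      rw [Metric.tendsto_nhdsWithin_nhds] at hL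
      obtain ⟨δ, hδ, hball⟩ := hL 1 one_pos
      have hlt : max a (x₀ - δ) < x₀ := max_lt hax₀' (by linarith)
      obtain ⟨y₀, hy₀A, hy₀gt⟩ := exists_lt_of_lt_csSup hAne hlt
      obtain ⟨M1, hM1⟩ := hy₀A.2
      refine ⟨⟨hax₀, hx₀b⟩, ⟨max M1 (max (L + 1) (f x₀)), ?_⟩⟩
      rintro _ ⟨z, hz, rfl⟩
      rcases le_or_gt z y₀ with hzy | hzy
      · exact le_trans (hM1 ⟨z, ⟨hz.1, hzy⟩, rfl⟩) (le_max_left _ _)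
      · rcases eq_or_lt_of_le hz.2 with rfl | hzx₀
        · exact le_trans (le_max_right _ _) (le_max_right _ _)
        · have h1 : z ∈ Set.Iio x₀ := hzx₀
          have h2 : dist z x₀ < δ := by
            rw [Real.dist_eq, abs_of_nonpos (by linarith)]
            have : x₀ - δ < y₀ := lt_of_le_of_lt (le_max_right _ _) hy₀gt
            linarith
          have := hball h1 h2
          rw [Real.dist_eq] at this
          have : f z < L + 1 := by
            have := abs_lt.1 this
            linarith [this.2]
          exact le_trans this.le (le_trans (le_max_left _ _) (le_max_right _ _))
  -- x₀ = b
  rcases eq_or_lt_of_le hx₀b with heq | hx₀b'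
  · rw [← heq]; exact hx₀A.2
  · exfalso
    have hrc := hf.1 x₀ ⟨hax₀, hx₀b'⟩
    rw [Metric.tendsto_nhdsWithin_nhds] at hrc
    obtain ⟨δ, hδ, hball⟩ := hrc 1 one_pos
    set x₁ := min (x₀ + δ / 2) b with hx₁
    have hx₀x₁ : x₀ < x₁ := lt_min (by linarith) hx₀b'
    have hx₁A : x₁ ∈ A := by
      obtain ⟨M0, hM0⟩ := hx₀A.2
      refine ⟨⟨le_trans hax₀ hx₀x₁.le, min_le_right _ _⟩, ⟨max M0 (f x₀ + 1), ?_⟩⟩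
      rintro _ ⟨z, hz, rfl⟩
      rcases le_or_gt z x₀ with hzx | hzx
      · exact le_trans (hM0 ⟨z, ⟨hz.1, hzx⟩, rfl⟩) (le_max_left _ _)
      · have h1 : z ∈ Set.Ioi x₀ := hzx
        have h2 : dist z x₀ < δ := by
          rw [Real.dist_eq, abs_of_nonneg (by linarith)]
          have : z ≤ x₀ + δ / 2 := le_trans hz.2 (min_le_left _ _)
          linarith
        have := hball h1 h2
        rw [Real.dist_eq] at this
        have : f z < f x₀ + 1 := by
          have := abs_lt.1 this
          linarith [this.2]
        exact le_trans this.le (le_max_right _ _)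
    have := le_csSup hAbdd hx₁A
    rw [← hx₀] at this
    linarith

private lemma drawdown_lt {f : ℝ → ℝ} {a b c : ℝ} (hab : a ≤ b) (hf : CadlagOn f a b)
    {x y : ℝ} (hx : x ∈ Set.Icc a b) (hxT : x < firstDownTime f a b c)
    (hy : y ∈ Set.Icc a x) : f y - f x < c := by
  have hB := cadlag_bddAbove hab hf
  have hxD : x ∉ {z ∈ Set.Icc a b | c ≤ sSup (f '' Set.Icc a z) - f z} := by
    intro hxd
    rw [firstDownTime] at hxT
    split_ifs at hxT with hD
    · rw [hD] at hxd; exact hxd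
    · exact absurd (csInf_le ⟨a, fun z hz => hz.1.1⟩ hxd) (not_le.2 hxT)
  have h1 : ¬ (c ≤ sSup (f '' Set.Icc a x) - f x) := fun h => hxD ⟨hx, h⟩
  have h2 : f y ≤ sSup (f '' Set.Icc a x) :=
    le_csSup (hB.mono (Set.image_mono (Set.Icc_subset_Icc_right hx.2)))
      (Set.mem_image_of_mem f hy)
  linarith [not_le.1 h1]

private lemma drawdown_at_T {f : ℝ → ℝ} {a b c : ℝ} (hab : a < b) (hf : CadlagOn f a b)
    (hne : {x ∈ Set.Icc a b | c ≤ sSup (f '' Set.Icc a x) - f x}.Nonempty)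
    (hTb : firstDownTime f a b c < b) :
    c ≤ sSup (f '' Set.Icc a (firstDownTime f a b c)) - f (firstDownTime f a b c) := by
  have hB := cadlag_bddAbove hab.le hf
  set D := {x ∈ Set.Icc a b | c ≤ sSup (f '' Set.Icc a x) - f x} with hDdef
  have hD : D ≠ ∅ := hne.ne_empty
  have hTdef : firstDownTime f a b c = sInf D := by rw [firstDownTime, if_neg hD]
  rw [hTdef] at hTb ⊢
  have hbdd : BddBelow D := ⟨a, fun z hz => hz.1.1⟩
  have haT : a ≤ sInf D := le_csInf hne fun z hz => hz.1.1
  by_cases hmem : sInf D ∈ D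
  · exact hmem.2
  · apply le_of_forall_sub_le
    intro ε hε
    have hrc := hf.1 (sInf D) ⟨haT, hTb⟩
    rw [Metric.tendsto_nhdsWithin_nhds] at hrc
    obtain ⟨δ, hδ, hball⟩ := hrc (ε / 2) (by linarith)
    obtain ⟨x, hxD, hxlt⟩ := exists_lt_of_csInf_lt hne (lt_add_of_pos_right (sInf D) hδ)
    have hTx : sInf D ≤ x := csInf_le hbdd hxD
    have hTx' : sInf D < x := lt_of_le_of_ne hTx (fun h => hmem (h ▸ hxD))
    have hfx : |f x - f (sInf D)| < ε / 2 := by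
      have := hball (Set.mem_Ioi.2 hTx') (by rw [Real.dist_eq, abs_of_nonneg (by linarith)]; linarith)
      rwa [Real.dist_eq] at this
    have hfT : f (sInf D) ≤ sSup (f '' Set.Icc a (sInf D)) :=
      le_csSup (hB.mono (Set.image_mono (Set.Icc_subset_Icc_right hTb.le)))
        (Set.mem_image_of_mem f ⟨haT, le_refl _⟩)
    have key : sSup (f '' Set.Icc a x) ≤ sSup (f '' Set.Icc a (sInf D)) + ε / 2 := by
      refine csSup_le ⟨f a, Set.mem_image_of_mem f ⟨le_refl a, haT.trans hTx⟩⟩ ?_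
      rintro _ ⟨z, hz, rfl⟩
      rcases le_or_gt z (sInf D) with hzT | hzT
      · exact le_trans (le_csSup (hB.mono (Set.image_mono (Set.Icc_subset_Icc_right hTb.le)))
          (Set.mem_image_of_mem f ⟨hz.1, hzT⟩)) (by linarith)
      · have := hball (Set.mem_Ioi.2 hzT)
          (by rw [Real.dist_eq, abs_of_nonneg (by linarith)]; linarith [hz.2])
        rw [Real.dist_eq] at this
        have h2 := (abs_lt.1 this).2
        linarith
    have hc := hxD.2
    have hfx2 := (abs_lt.1 hfx).1
    linarith

private lemma sum_trunc_bound (f : ℝ → ℝ) (c : ℝ) (n : ℕ) (t : ℕ → ℝ)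
    (H : ∀ i j, i ≤ j → j < n → f (t i) - f (t j) ≤ c) :
    (∑ i ∈ Finset.range n, max (f (t (i + 1)) - f (t i) - c) 0) = 0 ∨
    ∃ i j, i < j ∧ j ≤ n ∧
      (∑ i ∈ Finset.range n, max (f (t (i + 1)) - f (t i) - c) 0) ≤ f (t j) - f (t i) - c := by
  induction n with
  | zero => left; simp
  | succ n ih =>
    have H' : ∀ i j, i ≤ j → j < n → f (t i) - f (t j) ≤ c :=
      fun i j hij hjn => H i j hij (by omega)
    rw [Finset.sum_range_succ]
    rcases le_or_gt (f (t (n + 1)) - f (t n) - c) 0 with hφ | hφ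
    · rw [max_eq_right hφ]
      rcases ih H' with h | ⟨i, j, hij, hjn, hle⟩
      · left; rw [h, add_zero]
      · right; exact ⟨i, j, hij, by omega, by rw [add_zero]; exact hle⟩
    · rw [max_eq_left hφ.le]
      rcases ih H' with h | ⟨i, j, hij, hjn, hle⟩
      · right; exact ⟨n, n + 1, by omega, le_refl _, by rw [h, zero_add]⟩
      · right
        refine ⟨i, n + 1, by omega, le_refl _, ?_⟩
        have := H j n hjn (by omega)
        linarith

private lemma partition_le_upTruncVar (f : ℝ → ℝ) {α β c : ℝ} (n : ℕ) (r : ℕ → ℝ)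
    (h0 : α ≤ r 0) (hstep : ∀ i < n, r i < r (i + 1)) (hlast : r n ≤ β) :
    ∑ i ∈ Finset.range n, ENNReal.ofReal (max (f (r (i + 1)) - f (r i) - c) 0) ≤
      upTruncVar f α β c := by
  unfold upTruncVar
  exact le_iSup_of_le n (le_iSup_of_le r (le_iSup_of_le h0 (le_iSup_of_le hstep
    (le_iSup_of_le hlast le_rfl))))

private lemma pair_le (f : ℝ → ℝ) {a m c t u : ℝ} (ht : a ≤ t) (htu : t < u) (hu : u ≤ m) :
    ENNReal.ofReal (max (f u - f t - c) 0) ≤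
      ⨆ (t' : ℝ) (u' : ℝ) (_ : a ≤ t') (_ : t' < u') (_ : u' ≤ m),
        ENNReal.ofReal (max (f u' - f t' - c) 0) :=
  le_iSup_of_le t (le_iSup_of_le u (le_iSup_of_le ht (le_iSup_of_le htu (le_iSup_of_le hu le_rfl))))

private lemma combine_le (f : ℝ → ℝ) {a m s c : ℝ} (ham : a ≤ m) (hms : m ≤ s)
    {t u : ℝ} (ht : a ≤ t) (htu : t < u) (hu : u ≤ m)
    {n : ℕ} {r : ℕ → ℝ} (h0 : m ≤ r 0) (hstep : ∀ i < n, r i < r (i + 1)) (hlast : r n ≤ s) :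
    ENNReal.ofReal (max (f u - f t - c) 0) +
      ∑ i ∈ Finset.range n, ENNReal.ofReal (max (f (r (i + 1)) - f (r i) - c) 0) ≤
      upTruncVar f a s c := by
  rcases eq_or_lt_of_le (hu.trans h0) with heq | hlt
  · -- u = r 0
    set w : ℕ → ℝ := fun i => match i with | 0 => t | (k + 1) => r k with hw
    have hsum : (∑ i ∈ Finset.range (n + 1),
        ENNReal.ofReal (max (f (w (i + 1)) - f (w i) - c) 0)) =
        ENNReal.ofReal (max (f (r 0) - f t - c) 0) +
        ∑ i ∈ Finset.range n, ENNReal.ofReal (max (f (r (i + 1)) - f (r i) - c) 0) := by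
      rw [Finset.sum_range_succ']
      have e1 : (∑ i ∈ Finset.range n,
          ENNReal.ofReal (max (f (w (i + 1 + 1)) - f (w (i + 1)) - c) 0)) =
          ∑ i ∈ Finset.range n, ENNReal.ofReal (max (f (r (i + 1)) - f (r i) - c) 0) :=
        Finset.sum_congr rfl fun i _ => rfl
      rw [e1, add_comm]
    have := partition_le_upTruncVar f (c := c) (n + 1) w ht
      (by
        intro i hi
        match i with
        | 0 => exact lt_of_lt_of_le htu (le_of_eq heq)
        | (k + 1) => exact hstep k (by omega))
      (by exact hlast)
    rw [hsum] at this
    rw [← heq] at this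
    exact this
  · -- u < r 0
    set w : ℕ → ℝ := fun i => match i with | 0 => t | 1 => u | (k + 2) => r k with hw
    have hsum : (∑ i ∈ Finset.range (n + 2),
        ENNReal.ofReal (max (f (w (i + 1)) - f (w i) - c) 0)) =
        ENNReal.ofReal (max (f u - f t - c) 0) +
        (ENNReal.ofReal (max (f (r 0) - f u - c) 0) +
          ∑ i ∈ Finset.range n, ENNReal.ofReal (max (f (r (i + 1)) - f (r i) - c) 0)) := by
      rw [Finset.sum_range_succ', Finset.sum_range_succ']
      have e1 : (∑ i ∈ Finset.range n,
          ENNReal.ofReal (max (f (w (i + 1 + 1 + 1)) - f (w (i + 1 + 1)) - c) 0)) =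
          ∑ i ∈ Finset.range n, ENNReal.ofReal (max (f (r (i + 1)) - f (r i) - c) 0) :=
        Finset.sum_congr rfl fun i _ => rfl
      rw [e1]
      ring
    have := partition_le_upTruncVar f (c := c) (n + 2) w ht
      (by
        intro i hi
        match i with
        | 0 => exact htu
        | 1 => exact hlt
        | (k + 2) => exact hstep k (by omega))
      (by exact hlast)
    rw [hsum] at this
    refine le_trans ?_ this
    exact add_le_add_right (le_add_self) _

open Classical in
private lemma iSup3_eq {P Q R : Prop} (x : ℝ≥0∞) :
    (⨆ (_ : P) (_ : Q) (_ : R), x) = if P ∧ Q ∧ R then x else 0 := by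
  by_cases h : P ∧ Q ∧ R
  · rw [if_pos h, iSup_pos h.1, iSup_pos h.2.1, iSup_pos h.2.2]
  · rw [if_neg h]
    by_cases h1 : P
    · rw [iSup_pos h1]
      by_cases h2 : Q
      · rw [iSup_pos h2, iSup_neg (fun h3 => h ⟨h1, h2, h3⟩)]; rfl
      · rw [iSup_neg h2]; rfl
    · rw [iSup_neg h1]; rfl

private lemma easy_dir (f : ℝ → ℝ) {a m s c : ℝ} (ham : a ≤ m) (hms : m ≤ s) :
    (⨆ (t : ℝ) (u : ℝ) (_ : a ≤ t) (_ : t < u) (_ : u ≤ m),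
        ENNReal.ofReal (max (f u - f t - c) 0)) + upTruncVar f m s c ≤ upTruncVar f a s c := by
  have hSp : (⨆ (t : ℝ) (u : ℝ) (_ : a ≤ t) (_ : t < u) (_ : u ≤ m),
      ENNReal.ofReal (max (f u - f t - c) 0)) =
      ⨆ p : ℝ × ℝ, ⨆ (_ : a ≤ p.1) (_ : p.1 < p.2) (_ : p.2 ≤ m),
        ENNReal.ofReal (max (f p.2 - f p.1 - c) 0) := by
    apply le_antisymm
    · exact iSup_le fun t => iSup_le fun u => le_iSup_of_le (t, u) le_rfl
    · exact iSup_le fun p => le_iSup_of_le p.1 (le_iSup_of_le p.2 le_rfl)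
  have hU : upTruncVar f m s c =
      ⨆ q : ℕ × (ℕ → ℝ), ⨆ (_ : m ≤ q.2 0) (_ : ∀ i < q.1, q.2 i < q.2 (i + 1)) (_ : q.2 q.1 ≤ s),
        ∑ i ∈ Finset.range q.1, ENNReal.ofReal (max (f (q.2 (i + 1)) - f (q.2 i) - c) 0) := by
    apply le_antisymm
    · exact iSup_le fun n => iSup_le fun t => le_iSup_of_le (n, t) le_rfl
    · exact iSup_le fun q => le_iSup_of_le q.1 (le_iSup_of_le q.2 le_rfl)
  rw [hSp, hU]
  refine ENNReal.iSup_add_iSup_le fun p q => ?_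
  rw [iSup3_eq, iSup3_eq]
  split_ifs with hp hq hq
  · exact combine_le f ham hms hp.1 hp.2.1 hp.2.2 hq.1 hq.2.1 hq.2.2
  · rw [add_zero]
    have := partition_le_upTruncVar f (c := c) (α := a) (β := s) 1
      (fun i => if i = 0 then p.1 else p.2) (by simpa using hp.1)
      (by intro i hi; interval_cases i; simpa using hp.2.1)
      (by simpa using hp.2.2.trans hms)
    simpa using this
  · rw [zero_add]
    exact partition_le_upTruncVar f q.1 q.2 (ham.trans hq.1) hq.2.1 hq.2.2
  · simp

private lemma upTruncVar_le {f : ℝ → ℝ} {α β c : ℝ} {X : ℝ≥0∞}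
    (h : ∀ (n : ℕ) (t : ℕ → ℝ), α ≤ t 0 → (∀ i < n, t i < t (i + 1)) → t n ≤ β →
      (∑ i ∈ Finset.range n, ENNReal.ofReal (max (f (t (i + 1)) - f (t i) - c) 0)) ≤ X) :
    upTruncVar f α β c ≤ X := by
  unfold upTruncVar
  exact iSup_le fun n => iSup_le fun t => iSup_le fun h0 => iSup_le fun hs =>
    iSup_le fun hl => h n t h0 hs hl

/-- Decomposition of `UTV^c(f,[a,s])` at the first downward jump time `T` of size `c`. -/
theorem upTruncVar_split_at_first_down_time
    (a b c : ℝ) (hab : a < b) (hc : 0 < c) (f : ℝ → ℝ) (hf : CadlagOn f a b) :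
    ∀ s ∈ Set.Ioc a b,
      upTruncVar f a s c =
        (⨆ (t : ℝ) (u : ℝ) (_ : a ≤ t) (_ : t < u) (_ : u ≤ min (firstDownTime f a b c) s),
          ENNReal.ofReal (max (f u - f t - c) 0)) +
        upTruncVar f (min (firstDownTime f a b c) s) s c := by
  intro s hs
  classical
  obtain ⟨has, hsb⟩ := hs
  have hB := cadlag_bddAbove hab.le hf
  set T := firstDownTime f a b c with hTdef
  have haT : a ≤ T := by
    rw [hTdef, firstDownTime]
    split_ifs with h
    · exact hab.le
    · exact le_csInf (Set.nonempty_iff_ne_empty.2 h) fun z hz => hz.1.1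
  have hTb : T ≤ b := by
    rw [hTdef, firstDownTime]
    split_ifs with h
    · exact le_refl b
    · obtain ⟨z, hz⟩ := Set.nonempty_iff_ne_empty.2 h
      exact le_trans (csInf_le ⟨a, fun w hw => hw.1.1⟩ hz) hz.1.2
  set m := min T s with hmdef
  have ham : a ≤ m := le_min haT has.le
  have hms : m ≤ s := min_le_right _ _
  have hmT : m ≤ T := min_le_left _ _
  have hmb : m ≤ b := hms.trans hsb
  set Sp := ⨆ (t : ℝ) (u : ℝ) (_ : a ≤ t) (_ : t < u) (_ : u ≤ m),
      ENNReal.ofReal (max (f u - f t - c) 0) with hSpdef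
  have hpairle : ∀ {t' u : ℝ}, a ≤ t' → t' < u → u ≤ m →
      ENNReal.ofReal (max (f u - f t' - c) 0) ≤ Sp := by
    intro t' u h1 h2 h3
    rw [hSpdef]
    exact pair_le f h1 h2 h3
  apply le_antisymm
  · -- hard direction
    refine upTruncVar_le fun n t h0 hstep hlast => ?_
    refine ENNReal.le_of_forall_pos_le_add fun ε hε _ => ?_
    have hεR : (0 : ℝ) < (ε : ℝ) := hε
    by_cases hcase : t n ≤ m
    · -- Case A : the whole partition is inside [a, m]
      have H : ∀ i j, i ≤ j → j < n → f (t i) - f (t j) ≤ c := by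
        intro i j hij hjn
        have htj : t j < T := lt_of_lt_of_le (lt_of_lt_of_le (step_lt hstep hjn le_rfl) hcase) hmT
        refine (drawdown_lt hab.le hf
          ⟨h0.trans (step_le hstep (Nat.zero_le j) hjn.le), htj.le.trans hTb⟩
          (hTdef ▸ htj)
          ⟨h0.trans (step_le hstep (Nat.zero_le i) (by omega)), step_le hstep hij hjn.le⟩).le
      rcases sum_trunc_bound f c n t H with hz | ⟨I, J, hIJ, hJn, hle⟩
      · rw [← ENNReal.ofReal_sum_of_nonneg (fun i _ => le_max_right _ _), hz,
          ENNReal.ofReal_zero]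
        exact bot_le
      · have haI : a ≤ t I := h0.trans (step_le hstep (Nat.zero_le I) (by omega))
        have htIJ : t I < t J := step_lt hstep hIJ hJn
        have hJm : t J ≤ m := (step_le hstep hJn le_rfl).trans hcase
        calc (∑ i ∈ Finset.range n, ENNReal.ofReal (max (f (t (i + 1)) - f (t i) - c) 0))
            = ENNReal.ofReal (∑ i ∈ Finset.range n, max (f (t (i + 1)) - f (t i) - c) 0) :=
              (ENNReal.ofReal_sum_of_nonneg fun i _ => le_max_right _ _).symm
          _ ≤ ENNReal.ofReal (max (f (t J) - f (t I) - c) 0) :=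
              ENNReal.ofReal_le_ofReal (hle.trans (le_max_left _ _))
          _ ≤ Sp := hpairle haI htIJ hJm
          _ ≤ Sp + upTruncVar f m s c := le_self_add
          _ ≤ Sp + upTruncVar f m s c + (ε : ℝ≥0∞) := le_self_add
    · -- Case B : the partition crosses m
      push_neg at hcase
      have hex : ∃ j, m ≤ t j := ⟨n, hcase.le⟩
      set k := Nat.find hex with hkdef
      have hkk : m ≤ t k := Nat.find_spec hex
      have hkmin : ∀ j < k, t j < m := fun j hj => lt_of_not_ge (Nat.find_min hex hj)
      have hkn : k ≤ n := Nat.find_le hcase.le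
      rcases Nat.eq_zero_or_pos k with hk0 | hkpos
      · -- the partition lies entirely in [m, s]
        have h0' : m ≤ t 0 := hk0 ▸ hkk
        calc (∑ i ∈ Finset.range n, ENNReal.ofReal (max (f (t (i + 1)) - f (t i) - c) 0))
            ≤ upTruncVar f m s c := partition_le_upTruncVar f n t h0' hstep hlast
          _ ≤ Sp + upTruncVar f m s c := le_add_self
          _ ≤ Sp + upTruncVar f m s c + (ε : ℝ≥0∞) := le_self_add
      · -- 0 < k
        have hsplit : (∑ i ∈ Finset.range n,
            ENNReal.ofReal (max (f (t (i + 1)) - f (t i) - c) 0)) =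
            (∑ i ∈ Finset.range k, ENNReal.ofReal (max (f (t (i + 1)) - f (t i) - c) 0)) +
            ∑ i ∈ Finset.range (n - k),
              ENNReal.ofReal (max (f (t (k + i + 1)) - f (t (k + i)) - c) 0) := by
          have hn' : n = k + (n - k) := by omega
          conv_lhs => rw [hn']
          rw [Finset.sum_range_add]
        have hA2 : (∑ i ∈ Finset.range (n - k),
            ENNReal.ofReal (max (f (t (k + i + 1)) - f (t (k + i)) - c) 0)) ≤
            upTruncVar f m s c := by
          refine partition_le_upTruncVar f (n - k) (fun j => t (k + j)) hkk
            (fun j hj => hstep (k + j) (by omega)) ?_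
          show t (k + (n - k)) ≤ s
          rw [show k + (n - k) = n from by omega]
          exact hlast
        have H1 : ∀ i j, i ≤ j → j < k → f (t i) - f (t j) ≤ c := by
          intro i j hij hjk
          have htj : t j < m := hkmin j hjk
          refine (drawdown_lt hab.le hf
            ⟨h0.trans (step_le hstep (Nat.zero_le j) (by omega)), htj.le.trans hmb⟩
            (hTdef ▸ lt_of_lt_of_le htj hmT)
            ⟨h0.trans (step_le hstep (Nat.zero_le i) (by omega)),
              step_le hstep hij (by omega)⟩).le
        rcases sum_trunc_bound f c k t H1 with hz | ⟨I, J, hIJ, hJk, hle⟩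
        · rw [hsplit, ← ENNReal.ofReal_sum_of_nonneg (fun i _ => le_max_right _ _), hz,
            ENNReal.ofReal_zero, zero_add]
          calc (∑ i ∈ Finset.range (n - k),
              ENNReal.ofReal (max (f (t (k + i + 1)) - f (t (k + i)) - c) 0))
              ≤ upTruncVar f m s c := hA2
            _ ≤ Sp + upTruncVar f m s c := le_add_self
            _ ≤ Sp + upTruncVar f m s c + (ε : ℝ≥0∞) := le_self_add
        · have haI : a ≤ t I := h0.trans (step_le hstep (Nat.zero_le I) (by omega))
          have htIJ : t I < t J := step_lt hstep hIJ (by omega)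
          have hA1 : (∑ i ∈ Finset.range k,
              ENNReal.ofReal (max (f (t (i + 1)) - f (t i) - c) 0)) =
              ENNReal.ofReal (∑ i ∈ Finset.range k, max (f (t (i + 1)) - f (t i) - c) 0) :=
            (ENNReal.ofReal_sum_of_nonneg fun i _ => le_max_right _ _).symm
          by_cases hJm : t J ≤ m
          · rw [hsplit, hA1]
            calc ENNReal.ofReal (∑ i ∈ Finset.range k, max (f (t (i + 1)) - f (t i) - c) 0) +
                (∑ i ∈ Finset.range (n - k),
                  ENNReal.ofReal (max (f (t (k + i + 1)) - f (t (k + i)) - c) 0))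
                ≤ ENNReal.ofReal (max (f (t J) - f (t I) - c) 0) + upTruncVar f m s c :=
                  add_le_add (ENNReal.ofReal_le_ofReal (hle.trans (le_max_left _ _))) hA2
              _ ≤ Sp + upTruncVar f m s c := add_le_add_left (hpairle haI htIJ hJm) _
              _ ≤ Sp + upTruncVar f m s c + (ε : ℝ≥0∞) := le_self_add
          · push_neg at hJm
            have hJk' : J = k := by
              by_contra hne'
              exact absurd (hkmin J (lt_of_le_of_ne hJk hne')) (not_lt.2 hJm.le)
            subst hJk'
            have hms' : m < s := lt_of_lt_of_le hJm ((step_le hstep hkn le_rfl).trans hlast)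
            have hTs : T < s := by
              rcases lt_or_ge T s with h | h
              · exact h
              · exact absurd (min_eq_right h : m = s) (ne_of_lt hms')
            have hmT' : m = T := min_eq_left hTs.le
            have hTb' : T < b := lt_of_lt_of_le hTs hsb
            have hDne : {x ∈ Set.Icc a b | c ≤ sSup (f '' Set.Icc a x) - f x}.Nonempty := by
              rw [Set.nonempty_iff_ne_empty]
              intro hemp
              have hTbb : T = b := by rw [hTdef, firstDownTime, if_pos hemp]
              exact absurd hTbb (ne_of_lt hTb')
            have hdd : c ≤ sSup (f '' Set.Icc a m) - f m := by
              rw [hmT', hTdef]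
              exact drawdown_at_T hab hf hDne (by rw [← hTdef]; exact hTb')
            have himne : (f '' Set.Icc a m).Nonempty :=
              ⟨f a, Set.mem_image_of_mem f ⟨le_refl a, ham⟩⟩
            obtain ⟨v, hvmem, hvlt⟩ := exists_lt_of_lt_csSup himne
              (show sSup (f '' Set.Icc a m) - (ε : ℝ) < sSup (f '' Set.Icc a m) by linarith)
            obtain ⟨p, hp, hpv⟩ := hvmem
            rw [← hpv] at hvlt
            have hfp : f m + c - (ε : ℝ) < f p := by linarith
            -- the crossing partition bound
            have hcross : ENNReal.ofReal (max (f (t k) - f m - c) 0) +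
                (∑ i ∈ Finset.range (n - k),
                  ENNReal.ofReal (max (f (t (k + i + 1)) - f (t (k + i)) - c) 0)) ≤
                upTruncVar f m s c := by
              have hpt := partition_le_upTruncVar f (c := c) (n - k + 1)
                (fun j => match j with | 0 => m | (l + 1) => t (k + l))
                (le_refl m)
                (by
                  intro j hj
                  match j with
                  | 0 => exact hJm
                  | (l + 1) => exact hstep (k + l) (by omega))
                (by
                  show t (k + (n - k)) ≤ s
                  rw [show k + (n - k) = n from by omega]
                  exact hlast)
              rw [Finset.sum_range_succ'] at hpt
              have e1 : (∑ j ∈ Finset.range (n - k), ENNReal.ofReal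
                  (max (f ((fun j => match j with | 0 => m | (l + 1) => t (k + l)) (j + 1 + 1)) -
                    f ((fun j => match j with | 0 => m | (l + 1) => t (k + l)) (j + 1)) - c) 0)) =
                  ∑ i ∈ Finset.range (n - k),
                    ENNReal.ofReal (max (f (t (k + i + 1)) - f (t (k + i)) - c) 0) :=
                Finset.sum_congr rfl fun j _ => rfl
              rw [e1] at hpt
              rw [add_comm]
              exact hpt
            rcases le_or_gt p (t I) with hpI | hpI
            · -- p ≤ t I
              have htIm : t I < m := hkmin I hIJ
              have h2 : f p - f (t I) < c :=
                drawdown_lt hab.le hf ⟨haI, htIm.le.trans hmb⟩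
                  (hTdef ▸ lt_of_lt_of_le htIm hmT) ⟨hp.1, hpI⟩
              have hSr1 : (∑ i ∈ Finset.range k, max (f (t (i + 1)) - f (t i) - c) 0) ≤
                  max (f (t k) - f m - c) 0 + (ε : ℝ) := by
                have l1 : f (t k) - f (t I) - c ≤ (f (t k) - f m - c) + (ε : ℝ) := by linarith
                have l2 := le_max_left (f (t k) - f m - c) (0 : ℝ)
                linarith
              rw [hsplit, hA1]
              calc ENNReal.ofReal (∑ i ∈ Finset.range k, max (f (t (i + 1)) - f (t i) - c) 0) +
                  (∑ i ∈ Finset.range (n - k),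
                    ENNReal.ofReal (max (f (t (k + i + 1)) - f (t (k + i)) - c) 0))
                  ≤ (ENNReal.ofReal (max (f (t k) - f m - c) 0) + (ε : ℝ≥0∞)) +
                    (∑ i ∈ Finset.range (n - k),
                      ENNReal.ofReal (max (f (t (k + i + 1)) - f (t (k + i)) - c) 0)) := by
                    refine add_le_add_left ?_ _
                    calc ENNReal.ofReal (∑ i ∈ Finset.range k, max (f (t (i + 1)) - f (t i) - c) 0)
                        ≤ ENNReal.ofReal (max (f (t k) - f m - c) 0 + (ε : ℝ)) :=
                          ENNReal.ofReal_le_ofReal hSr1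
                      _ = ENNReal.ofReal (max (f (t k) - f m - c) 0) + (ε : ℝ≥0∞) := by
                          rw [ENNReal.ofReal_add (le_max_right _ _) hεR.le,
                            ENNReal.ofReal_coe_nnreal]
                _ = (ENNReal.ofReal (max (f (t k) - f m - c) 0) +
                    (∑ i ∈ Finset.range (n - k),
                      ENNReal.ofReal (max (f (t (k + i + 1)) - f (t (k + i)) - c) 0))) +
                    (ε : ℝ≥0∞) := by ring
                _ ≤ upTruncVar f m s c + (ε : ℝ≥0∞) := add_le_add_left hcross _
                _ ≤ Sp + upTruncVar f m s c + (ε : ℝ≥0∞) := add_le_add_left le_add_self _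
            · -- t I < p
              have hpm : p ≤ m := hp.2
              have hSr1 : (∑ i ∈ Finset.range k, max (f (t (i + 1)) - f (t i) - c) 0) ≤
                  max (f p - f (t I) - c) 0 + (max (f (t k) - f m - c) 0 + (ε : ℝ)) := by
                have l1 := le_max_left (f p - f (t I) - c) (0 : ℝ)
                have l2 := le_max_left (f (t k) - f m - c) (0 : ℝ)
                linarith
              rw [hsplit, hA1]
              calc ENNReal.ofReal (∑ i ∈ Finset.range k, max (f (t (i + 1)) - f (t i) - c) 0) +
                  (∑ i ∈ Finset.range (n - k),
                    ENNReal.ofReal (max (f (t (k + i + 1)) - f (t (k + i)) - c) 0))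
                  ≤ (ENNReal.ofReal (max (f p - f (t I) - c) 0) +
                      (ENNReal.ofReal (max (f (t k) - f m - c) 0) + (ε : ℝ≥0∞))) +
                    (∑ i ∈ Finset.range (n - k),
                      ENNReal.ofReal (max (f (t (k + i + 1)) - f (t (k + i)) - c) 0)) := by
                    refine add_le_add_left ?_ _
                    calc ENNReal.ofReal (∑ i ∈ Finset.range k, max (f (t (i + 1)) - f (t i) - c) 0)
                        ≤ ENNReal.ofReal (max (f p - f (t I) - c) 0 +
                            (max (f (t k) - f m - c) 0 + (ε : ℝ))) :=
                          ENNReal.ofReal_le_ofReal hSr1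
                      _ = ENNReal.ofReal (max (f p - f (t I) - c) 0) +
                          (ENNReal.ofReal (max (f (t k) - f m - c) 0) + (ε : ℝ≥0∞)) := by
                          rw [ENNReal.ofReal_add (le_max_right _ _)
                            (add_nonneg (le_max_right _ _) hεR.le),
                            ENNReal.ofReal_add (le_max_right _ _) hεR.le,
                            ENNReal.ofReal_coe_nnreal]
                _ = (ENNReal.ofReal (max (f p - f (t I) - c) 0) +
                    (ENNReal.ofReal (max (f (t k) - f m - c) 0) +
                      (∑ i ∈ Finset.range (n - k),
                        ENNReal.ofReal (max (f (t (k + i + 1)) - f (t (k + i)) - c) 0)))) +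
                    (ε : ℝ≥0∞) := by ring
                _ ≤ Sp + upTruncVar f m s c + (ε : ℝ≥0∞) := by
                    refine add_le_add_left (add_le_add (hpairle haI hpI hpm) hcross) _
  · -- easy direction
    rw [hSpdef]
    exact easy_dir f ham hms
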